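/- Let n ≥ 1 and define P : ℝ → ℝ^{4n} → ℝ³ → ℂ by P t x z := ∫_{τ ∈ ℝ³} exp( -( i·⟨τ, z⟩ + (1/2)·‖τ‖·(cosh ‖τ‖ / sinh ‖τ‖)·‖x‖² ) / t ) · ( ‖τ‖ / sinh ‖τ‖ )^{2n} dτ. Let 0 < s < 1 and α, β, γ, δ ∈ {1,…,4n}, and assume that none of the pairings (α = β and γ = δ), (α = γ and β = δ), (α = δ and β = γ) holds. Then ∫_{(x,z) ∈ ℝ^{4n} × ℝ³} P (1-s) x z · x_α · x_β · (∂_{x_γ}∂_{x_δ} P) s x z d(x,z) = 0, where ∂_{x_γ}∂_{x_δ}P s x z denotes the second-order partial derivative of the map x ↦ P s x z in the γ-th and δ-th coordinate directions, x_α is the α-th coordinate of x, and the integral is over ℝ^{4n} × ℝ³ with Lebesgue measure. -/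

import Mathlib

open RealInnerProductSpace MeasureTheory

/-- The Beals–Gaveau–Greiner heat kernel (unnormalized) of the intrinsic sublaplacian on
the quaternionic Heisenberg group. -/
noncomputable def bggKernel (n : ℕ) (t : ℝ) (x : EuclideanSpace ℝ (Fin (4 * n)))
    (z : EuclideanSpace ℝ (Fin 3)) : ℂ :=
  ∫ τ : EuclideanSpace ℝ (Fin 3),
    Complex.exp (-((Complex.I * ((⟪τ, z⟫ : ℝ) : ℂ) +
        (((1 / 2 : ℝ) * ‖τ‖ * (Real.cosh ‖τ‖ / Real.sinh ‖τ‖) * ‖x‖ ^ 2 : ℝ) : ℂ)) /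
        (t : ℂ))) *
      (((‖τ‖ / Real.sinh ‖τ‖ : ℝ) : ℂ)) ^ (2 * n)

/-- Reflection of the `i`-th coordinate in Euclidean space, as a linear isometry
equivalence. -/
noncomputable def reflEquiv {m : ℕ} (i : Fin m) :
    EuclideanSpace ℝ (Fin m) ≃ₗᵢ[ℝ] EuclideanSpace ℝ (Fin m) :=
  LinearIsometryEquiv.piLpCongrRight 2
    (fun j => if j = i then LinearIsometryEquiv.neg ℝ else LinearIsometryEquiv.refl ℝ ℝ)

lemma reflEquiv_apply {m : ℕ} (i : Fin m) (x : EuclideanSpace ℝ (Fin m)) (a : Fin m) :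
    reflEquiv i x a = (if a = i then (-1 : ℝ) else 1) * x a := by
  simp only [reflEquiv, LinearIsometryEquiv.piLpCongrRight_apply]
  by_cases h : a = i
  · subst h; simp
  · simp [h]

lemma reflEquiv_single {m : ℕ} (i : Fin m) (a : Fin m) :
    reflEquiv i (EuclideanSpace.single a (1 : ℝ)) =
      (if a = i then (-1 : ℝ) else 1) • EuclideanSpace.single a (1 : ℝ) := by
  ext j
  simp only [reflEquiv_apply, PiLp.smul_apply, smul_eq_mul, EuclideanSpace.single_apply]
  by_cases hja : j = a <;> by_cases hji : j = i <;> by_cases hai : a = i <;>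
    simp_all <;> ring

/-- Key lemma: for a function `f` that is (anti)symmetric under the reflection `reflEquiv i`,
the derivative in a coordinate direction at the reflected point picks up a sign. -/
lemma fderiv_reflEquiv {m : ℕ} (i : Fin m) (f : EuclideanSpace ℝ (Fin m) → ℂ) (c : ℝ)
    (hc : c = 1 ∨ c = -1) (hf : ∀ x, f (reflEquiv i x) = c • f x)
    (x : EuclideanSpace ℝ (Fin m)) (a : Fin m) :
    fderiv ℝ f (reflEquiv i x) (EuclideanSpace.single a (1 : ℝ)) =
      ((if a = i then (-1 : ℝ) else 1) * c) •
        fderiv ℝ f x (EuclideanSpace.single a (1 : ℝ)) := by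
  set e := reflEquiv i
  set iso := e.toContinuousLinearEquiv with hiso
  have hcoe : ⇑iso = ⇑e := e.coe_toContinuousLinearEquiv
  have hcomp : fderiv ℝ (f ∘ iso) x = (fderiv ℝ f (iso x)).comp (iso : _ →L[ℝ] _) :=
    iso.comp_right_fderiv
  have hfc : (f ∘ iso) = fun y => c • f y := by
    funext y
    simp only [Function.comp_apply, hcoe]
    exact hf y
  have hsm : fderiv ℝ (fun y => c • f y) x = c • fderiv ℝ f x := by
    rcases hc with h | h
    · subst h; simp
    · subst h
      have : (fun y => (-1 : ℝ) • f y) = fun y => -f y := by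
        funext y; simp
      rw [this, fderiv_fun_neg]
      ext v
      simp
  rw [hfc, hsm] at hcomp
  have happ := congrArg (fun L => L (EuclideanSpace.single a (1 : ℝ))) hcomp
  simp only [ContinuousLinearMap.smul_apply, ContinuousLinearMap.comp_apply,
    ContinuousLinearEquiv.coe_coe] at happ
  rw [show iso (EuclideanSpace.single a (1 : ℝ)) =
      (if a = i then (-1 : ℝ) else 1) • EuclideanSpace.single a (1 : ℝ) by
        rw [show iso (EuclideanSpace.single a (1 : ℝ)) = e (EuclideanSpace.single a (1 : ℝ))
          from congrFun hcoe _]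
        exact reflEquiv_single i a] at happ
  rw [_root_.map_smul] at happ
  have hx : iso x = e x := congrFun hcoe x
  rw [hx] at happ
  -- happ : c • fderiv ℝ f x single = ε • fderiv ℝ f (e x) single
  set ε : ℝ := if a = i then (-1 : ℝ) else 1 with hε
  have hε2 : ε * ε = 1 := by
    by_cases h : a = i <;> simp [hε, h]
  have := congrArg (fun w => ε • w) happ
  simp only [smul_smul, hε2, one_smul] at this
  rw [← this]

lemma bggKernel_reflEquiv (n : ℕ) (t : ℝ) (i : Fin (4 * n))
    (x : EuclideanSpace ℝ (Fin (4 * n))) (z : EuclideanSpace ℝ (Fin 3)) :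
    bggKernel n t (reflEquiv i x) z = bggKernel n t x z := by
  simp only [bggKernel, LinearIsometryEquiv.norm_map]

/-- Combinatorial lemma: if the four indices do not match up in pairs, some index
occurs an odd number of times, so the product of reflection signs is `-1`. -/
lemma exists_sign_neg_one {m : ℕ} (α β γ δ : Fin m)
    (hpair : ¬((α = β ∧ γ = δ) ∨ (α = γ ∧ β = δ) ∨ (α = δ ∧ β = γ))) :
    ∃ i : Fin m, (if α = i then (-1 : ℝ) else 1) * (if β = i then (-1 : ℝ) else 1) *
      (if γ = i then (-1 : ℝ) else 1) * (if δ = i then (-1 : ℝ) else 1) = -1 := by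
  push_neg at hpair
  obtain ⟨h1, h2, h3⟩ := hpair
  by_cases hab : α = β
  · have hgd : γ ≠ δ := h1 hab
    by_cases hga : γ = α
    · -- pick δ, which differs from α = β = γ
      have had : α ≠ δ := fun h => hgd (hga.trans h)
      have hbd : β ≠ δ := fun h => had (hab.trans h)
      refine ⟨δ, ?_⟩
      simp [had, hbd, hgd]
    · -- pick γ, which differs from α = β and from δ
      have hag : α ≠ γ := fun h => hga h.symm
      have hbg : β ≠ γ := fun h => hag (hab.trans h)
      have hgd' : γ ≠ γ → False := fun h => h rfl
      refine ⟨γ, ?_⟩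
      have hdg : δ ≠ γ := fun h => hgd (h.symm)
      simp [hag, hbg, hdg]
  · by_cases hag : α = γ
    · have hbd : β ≠ δ := h2 hag
      have hba : β ≠ α := fun h => hab h.symm
      have hbg : β ≠ γ := fun h => hba (h.trans hag.symm)
      refine ⟨β, ?_⟩
      have hab' : α ≠ β := hab
      have hgb : γ ≠ β := fun h => hbg h.symm
      have hdb : δ ≠ β := fun h => hbd h.symm
      simp [hab', hgb, hdb]
    · by_cases had : α = δ
      · have hbg : β ≠ γ := h3 had
        have hba : β ≠ α := fun h => hab h.symm
        have hbd : β ≠ δ := fun h => hba (h.trans had.symm)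
        refine ⟨β, ?_⟩
        have hgb : γ ≠ β := fun h => hbg h.symm
        have hdb : δ ≠ β := fun h => hbd h.symm
        simp [hab, hgb, hdb]
      · refine ⟨α, ?_⟩
        have hba : β ≠ α := fun h => hab h.symm
        have hga : γ ≠ α := fun h => hag h.symm
        have hda : δ ≠ α := fun h => had h.symm
        simp [hba, hga, hda]

/-- Formula (2) in the proof of Theorem 5.7: if the indices `α, β, γ, δ` are not
pairwise matched, the moment integral
`∫ P(1-s, x, z) · x_α x_β · ∂_{x_γ}∂_{x_δ} P(s, x, z) d(x, z)` vanishes. -/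
theorem integral_xx_dxdx_bggKernel_eq_zero
    (n : ℕ) (hn : 1 ≤ n) (s : ℝ) (hs0 : 0 < s) (hs1 : s < 1)
    (α β γ δ : Fin (4 * n))
    (hpair : ¬((α = β ∧ γ = δ) ∨ (α = γ ∧ β = δ) ∨ (α = δ ∧ β = γ))) :
    ∫ p : EuclideanSpace ℝ (Fin (4 * n)) × EuclideanSpace ℝ (Fin 3),
      bggKernel n (1 - s) p.1 p.2 * (p.1 α : ℂ) * (p.1 β : ℂ) *
        fderiv ℝ (fun x => fderiv ℝ (fun x' => bggKernel n s x' p.2) x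
            (EuclideanSpace.single δ 1)) p.1 (EuclideanSpace.single γ 1)
      = 0 := by
  classical
  obtain ⟨i, hsign⟩ := exists_sign_neg_one α β γ δ hpair
  set E := EuclideanSpace ℝ (Fin (4 * n))
  set Z := EuclideanSpace ℝ (Fin 3)
  set e := reflEquiv i with he
  set F : E × Z → ℂ := fun p =>
    bggKernel n (1 - s) p.1 p.2 * (p.1 α : ℂ) * (p.1 β : ℂ) *
      fderiv ℝ (fun x => fderiv ℝ (fun x' => bggKernel n s x' p.2) x
          (EuclideanSpace.single δ 1)) p.1 (EuclideanSpace.single γ 1) with hF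
  show ∫ p, F p = 0
  -- pointwise antisymmetry of F under the reflection in coordinate i
  have hkey : ∀ (x : E) (z : Z), F (e x, z) = -F (x, z) := by
    intro x z
    have hQ : ∀ y : E, (fun x' => bggKernel n s x' z) (e y) = (1 : ℝ) •
        (fun x' => bggKernel n s x' z) y := by
      intro y; simp only [one_smul]; exact bggKernel_reflEquiv n s i y z
    have hD1 : ∀ y : E,
        (fun x0 => fderiv ℝ (fun x' => bggKernel n s x' z) x0
            (EuclideanSpace.single δ (1 : ℝ))) (e y)
          = ((if δ = i then (-1 : ℝ) else 1) : ℝ) •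
            (fun x0 => fderiv ℝ (fun x' => bggKernel n s x' z) x0
              (EuclideanSpace.single δ (1 : ℝ))) y := by
      intro y
      have := fderiv_reflEquiv i (fun x' => bggKernel n s x' z) 1 (Or.inl rfl) hQ y δ
      simpa using this
    have hD2 := fderiv_reflEquiv i
      (fun x0 => fderiv ℝ (fun x' => bggKernel n s x' z) x0
        (EuclideanSpace.single δ (1 : ℝ)))
      (if δ = i then (-1 : ℝ) else 1)
      (by by_cases h : δ = i <;> simp [h]) hD1 x γ
    have hxa : ((e x α : ℝ) : ℂ) = (((if α = i then (-1 : ℝ) else 1) : ℝ) : ℂ) * (x α : ℂ) := by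
      rw [reflEquiv_apply]; push_cast; ring
    have hxb : ((e x β : ℝ) : ℂ) = (((if β = i then (-1 : ℝ) else 1) : ℝ) : ℂ) * (x β : ℂ) := by
      rw [reflEquiv_apply]; push_cast; ring
    have hP : bggKernel n (1 - s) (e x) z = bggKernel n (1 - s) x z :=
      bggKernel_reflEquiv n (1 - s) i x z
    simp only [hF]
    set a : ℝ := if α = i then (-1 : ℝ) else 1 with ha
    set b : ℝ := if β = i then (-1 : ℝ) else 1 with hb
    set c : ℝ := if γ = i then (-1 : ℝ) else 1 with hc
    set d : ℝ := if δ = i then (-1 : ℝ) else 1 with hd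
    set D : ℂ := fderiv ℝ (fun x0 => fderiv ℝ (fun x' => bggKernel n s x' z) x0
        (EuclideanSpace.single δ (1 : ℝ))) x (EuclideanSpace.single γ (1 : ℝ)) with hD
    have habcd : ((a : ℂ)) * b * c * d = -1 := by
      exact_mod_cast congrArg (fun r : ℝ => (r : ℂ)) hsign
    rw [hP, hxa, hxb, hD2, Complex.real_smul]
    push_cast
    linear_combination (bggKernel n (1 - s) x z * (x α : ℂ) * (x β : ℂ) * D) * habcd
  -- transfer through the measure-preserving reflection
  set T : (E × Z) ≃ᵐ (E × Z) :=
    (e.toHomeomorph.toMeasurableEquiv).prodCongr (MeasurableEquiv.refl Z) with hT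
  have hTapp : ∀ p : E × Z, T p = (e p.1, p.2) := fun p => rfl
  have hmp : MeasurePreserving (⇑T) (volume : Measure (E × Z)) volume := by
    have h1 : MeasurePreserving (Prod.map (⇑e) (id : Z → Z))
        ((volume : Measure E).prod (volume : Measure Z))
        ((volume : Measure E).prod (volume : Measure Z)) :=
      (e.measurePreserving).prod (MeasurePreserving.id _)
    rw [Measure.volume_eq_prod]
    exact h1
  have hint : ∫ p, F (T p) = ∫ p, F p := hmp.integral_comp T.measurableEmbedding F
  have hneg : ∫ p : E × Z, F (T p) = -∫ p, F p := by
    have : (fun p : E × Z => F (T p)) = fun p => -F p := by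
      funext p
      rw [hTapp p]
      exact hkey p.1 p.2
    rw [this, integral_neg]
  have h2 : (∫ p : E × Z, F p) = -(∫ p : E × Z, F p) := hint.symm.trans hneg
  linear_combination h2 / 2
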